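/- Let I be a proper ideal of R = C^∞(M,ℝ) of finite codimension, let y₁, …, y_n be the points of spec(I), and set k_i = dim_ℝ(R/(I + 𝔫_{y_i})). Then (𝔪_{y₁})^{k₁} ∩ ⋯ ∩ (𝔪_{y_n})^{k_n} ⊆ I. -/

import Mathlib

open scoped Manifold
open Module Filter Topology

noncomputable section

/-- The ℝ-algebra of smooth real-valued functions on a manifold `M` modelled on `ℝ^m`. -/
abbrev SmoothFns (m : ℕ) (M : Type*) [TopologicalSpace M]
    [ChartedSpace (EuclideanSpace ℝ (Fin m)) M] : Type _ :=
  C^(⊤ : ℕ∞)⟮𝓡 m, M; 𝓘(ℝ, ℝ), ℝ⟯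

variable {m : ℕ} {M : Type*} [TopologicalSpace M] [T2Space M] [SecondCountableTopology M]
  [ChartedSpace (EuclideanSpace ℝ (Fin m)) M] [IsManifold (𝓡 m) (⊤ : ℕ∞) M]

/-- The ideal `𝔪ₓ` of smooth functions vanishing at the point `x`. -/
def mIdeal (x : M) : Ideal (SmoothFns m M) where
  carrier := {f | f x = 0}
  add_mem' := by intro f g hf hg; simp_all
  zero_mem' := by simp
  smul_mem' := by intro c f hf; simp_all

/-- The ideal `𝔫ₓ` of smooth functions vanishing on some neighbourhood of the point `x`. -/
def nIdeal (x : M) : Ideal (SmoothFns m M) where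
  carrier := {f | ∀ᶠ y in 𝓝 x, f y = 0}
  add_mem' := by
    intro f g hf hg
    filter_upwards [hf, hg] with y h1 h2
    simp [h1, h2]
  zero_mem' := by filter_upwards with y; simp
  smul_mem' := by
    intro c f hf
    filter_upwards [hf] with y h
    simp [h]

/-- The spectrum of an ideal: the set of common zeros of its elements. -/
def idealSpec (I : Ideal (SmoothFns m M)) : Set M :=
  {x : M | ∀ f ∈ I, f x = 0}

section StatementSevenAux
open Set
set_option linter.unusedSectionVars false
set_option linter.unusedVariables false
namespace StatementSeven


theorem lcs {m : ℕ} {M : Type*} [TopologicalSpace M] [ChartedSpace (EuclideanSpace ℝ (Fin m)) M] :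
    LocallyCompactSpace M := Manifold.locallyCompact_of_finiteDimensional (𝓡 m)

/-- evaluation as an algebra hom -/
def evAlg (x : M) : SmoothFns m M →ₐ[ℝ] ℝ where
  toFun f := f x
  map_one' := rfl
  map_mul' _ _ := rfl
  map_zero' := rfl
  map_add' _ _ := rfl
  commutes' _ := rfl

@[simp] lemma evAlg_apply (x : M) (f : SmoothFns m M) : evAlg x f = f x := rfl

/-- bump functions -/
lemma exists_bump (x : M) {U : Set M} (hU : IsOpen U) (hx : x ∈ U) :
    ∃ f : SmoothFns m M, (∀ᶠ y in 𝓝 x, f y = 1) ∧ ∀ y, y ∉ U → f y = 0 := by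
  haveI := lcs (m := m) (M := M)
  obtain ⟨f, hf0, hf1, -⟩ := exists_contMDiffMap_zero_one_nhds_of_isClosed (𝓡 m) (n := (⊤ : ℕ∞))
    (isClosed_compl_iff.2 hU) (isClosed_singleton (x := x))
    (disjoint_compl_left_iff_subset.2 (Set.singleton_subset_iff.2 hx))
  refine ⟨f, ?_, fun y hy => hf0.self_of_nhdsSet y hy⟩
  simpa [nhdsSet_singleton] using hf1

/-- a smooth function with compact sublevel sets -/
lemma exists_proper : ∃ h : SmoothFns m M, ∀ r : ℝ, IsCompact {z : M | h z ≤ r} := by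
  haveI := lcs (m := m) (M := M)
  set K := CompactExhaustion.choice M with hK
  have Hloc : ∀ x : M, ∃ U ∈ 𝓝 x, ∃ g : M → ℝ, ContMDiffOn (𝓡 m) 𝓘(ℝ, ℝ) ((⊤ : ℕ∞) : WithTop ℕ∞) g U ∧
      ∀ y ∈ U, g y ∈ Set.Ioi ((K.find y : ℝ)) := by
    intro x
    refine ⟨interior (K (K.find x + 1)), ?_, fun _ => (K.find x + 2 : ℕ), contMDiffOn_const, ?_⟩
    · exact isOpen_interior.mem_nhds (K.subset_interior_succ _ (K.mem_find x))
    · intro y hy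
      have : K.find y ≤ K.find x + 1 := K.mem_iff_find_le.1 (interior_subset hy)
      have : (K.find y : ℝ) ≤ K.find x + 1 := by exact_mod_cast this
      simp only [Set.mem_Ioi]
      push_cast
      linarith
  obtain ⟨g, hg⟩ := exists_contMDiffMap_forall_mem_convex_of_local (𝓡 m)
    (fun x => convex_Ioi _) Hloc
  refine ⟨g, fun r => ?_⟩
  have hclosed : IsClosed {z : M | g z ≤ r} :=
    isClosed_le (g.contMDiff.continuous) continuous_const
  refine IsCompact.of_isClosed_subset (K.isCompact ⌊r⌋₊) hclosed ?_
  intro z hz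
  have h1 : (K.find z : ℝ) < r := lt_of_lt_of_le (hg z) hz
  have h2 : K.find z ≤ ⌊r⌋₊ := by
    exact_mod_cast Nat.le_floor (le_of_lt h1)
  exact K.subset h2 (K.mem_find z)

/-- local inverse of a function nonvanishing at a point -/
lemma exists_local_inv (g : SmoothFns m M) {x : M} (hx : g x ≠ 0) :
    ∃ h : SmoothFns m M, ∀ᶠ y in 𝓝 x, g y * h y = 1 := by
  haveI := lcs (m := m) (M := M)
  set U : Set M := {z | g z ≠ 0} with hU
  have hUopen : IsOpen U := isOpen_ne.preimage g.contMDiff.continuous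
  obtain ⟨f, hf0, hf1, -⟩ := exists_contMDiffMap_zero_one_nhds_of_isClosed (𝓡 m) (n := (⊤ : ℕ∞))
    (isClosed_compl_iff.2 hUopen) (isClosed_singleton (x := x))
    (disjoint_compl_left_iff_subset.2 (Set.singleton_subset_iff.2 hx))
  have hsm : ContMDiff (𝓡 m) 𝓘(ℝ, ℝ) ((⊤ : ℕ∞) : WithTop ℕ∞) (fun z => f z * (g z)⁻¹) := by
    intro z
    by_cases hz : g z = 0
    · have hz' : (z : M) ∈ Uᶜ := by simpa [hU] using hz
      have hev : ∀ᶠ w in 𝓝 z, f w = 0 :=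
        (nhds_le_nhdsSet hz') hf0
      have : (fun w => f w * (g w)⁻¹) =ᶠ[𝓝 z] (fun _ => (0 : ℝ)) := by
        filter_upwards [hev] with w hw; simp [hw]
      exact (contMDiffAt_const (c := (0:ℝ))).congr_of_eventuallyEq this
    · exact (f.contMDiff.contMDiffAt).mul ((g.contMDiff.contMDiffAt).inv₀ hz)
  refine ⟨⟨fun z => f z * (g z)⁻¹, hsm⟩, ?_⟩
  have hgx : ∀ᶠ y in 𝓝 x, g y ≠ 0 :=
    g.contMDiff.continuous.continuousAt.eventually_ne hx
  have hfx : ∀ᶠ y in 𝓝 x, f y = 1 := by simpa [nhdsSet_singleton] using hf1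
  filter_upwards [hgx, hfx] with y h1 h2
  simp only [ContMDiffMap.coeFn_mk, h2, one_mul]
  exact mul_inv_cancel₀ h1

/-- A finite-codimension ideal whose spectrum is empty is the whole ring. -/
lemma eq_top_of_spec_empty (J : Ideal (SmoothFns m M))
    [FiniteDimensional ℝ (SmoothFns m M ⧸ J)]
    (hs : ∀ x : M, ∃ g ∈ J, g x ≠ 0) : J = ⊤ := by
  classical
  obtain ⟨h, hcomp⟩ := exists_proper (m := m) (M := M)
  obtain ⟨p, pmon, hp⟩ := IsIntegral.of_finite ℝ (Ideal.Quotient.mkₐ ℝ J h)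
  have hp' : Polynomial.aeval (Ideal.Quotient.mkₐ ℝ J h) p = 0 := hp
  by_cases hdeg : 0 < p.degree
  swap
  · have hp1 : p = 1 := pmon.degree_le_zero_iff_eq_one.1 (not_lt.1 hdeg)
    rw [hp1, map_one] at hp'
    rw [Ideal.eq_top_iff_one, ← Ideal.Quotient.eq_zero_iff_mem, map_one]
    exact hp'
  · set q : Polynomial ℝ := p * p with hq
    set F : SmoothFns m M := Polynomial.aeval h q with hF
    have hFJ : F ∈ J := by
      rw [← Ideal.Quotient.eq_zero_iff_mem]
      have : Ideal.Quotient.mk J F = Polynomial.aeval (Ideal.Quotient.mkₐ ℝ J h) q := by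
        simpa [hF] using (Polynomial.aeval_algHom_apply (Ideal.Quotient.mkₐ ℝ J) h q).symm
      rw [this, hq, map_mul, hp', mul_zero]
    have hFval : ∀ z : M, F z = (Polynomial.eval (h z) p) ^ 2 := by
      intro z
      have : evAlg z F = Polynomial.aeval (evAlg z h) q :=
        (Polynomial.aeval_algHom_apply (evAlg z) h q).symm
      simpa [hq, Polynomial.coe_aeval_eq_eval, sq] using this
    have hF0 : ∀ z : M, 0 ≤ F z := fun z => (hFval z) ▸ sq_nonneg _
    -- a bound beyond which q is large
    have hqdeg : 0 < q.degree := by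
      rw [hq, Polynomial.degree_mul]
      calc (0 : WithBot ℕ) < p.degree := hdeg
        _ ≤ p.degree + p.degree := le_add_of_nonneg_left hdeg.le
    have htend := Polynomial.tendsto_atTop_of_leadingCoeff_nonneg q hqdeg
      (by simp [hq, (pmon.mul pmon).leadingCoeff])
    obtain ⟨T, hT⟩ := (htend.eventually_ge_atTop 2).exists_forall_of_atTop
    -- the sublevel set is compact
    have hKsub : {z : M | F z ≤ 1} ⊆ {z : M | h z ≤ T} := by
      intro z hz
      by_contra hzT
      have h2 : (2:ℝ) ≤ Polynomial.eval (h z) q := hT _ (le_of_not_ge hzT)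
      have : F z = Polynomial.eval (h z) q := by
        rw [hFval z, hq, Polynomial.eval_mul]; ring
      simp only [Set.mem_setOf_eq] at hz
      linarith [this ▸ hz]
    have hKc : IsCompact {z : M | F z ≤ 1} :=
      IsCompact.of_isClosed_subset (hcomp T)
        (isClosed_le F.contMDiff.continuous continuous_const) hKsub
    choose g hgJ hgne using hs
    obtain ⟨t, ht⟩ := hKc.elim_finite_subcover (fun z : M => {w : M | g z w ≠ 0})
      (fun z => isOpen_ne.preimage (g z).contMDiff.continuous)
      (fun z _ => Set.mem_iUnion.2 ⟨z, hgne z⟩)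
    set s : SmoothFns m M := F + ∑ z ∈ t, g z * g z with hsdef
    have hsJ : s ∈ J := Ideal.add_mem _ hFJ
      (Ideal.sum_mem _ (fun z _ => Ideal.mul_mem_left _ _ (hgJ z)))
    have hspos : ∀ w : M, 0 < s w := by
      intro w
      have hval : s w = F w + ∑ z ∈ t, (g z w) * (g z w) := by
        show evAlg w s = _
        rw [hsdef, map_add, map_sum]
        simp
      by_cases hw : w ∈ {z : M | F z ≤ 1}
      · obtain ⟨z, hzt, hzw⟩ := Set.mem_iUnion₂.1 (ht hw)
        have hzw' : g z w ≠ 0 := hzw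
        have hsum : 0 < ∑ z ∈ t, g z w * g z w :=
          Finset.sum_pos' (fun z _ => mul_self_nonneg _) ⟨z, hzt, mul_self_pos.2 hzw'⟩
        have := hF0 w
        rw [hval]; linarith
      · have h1 : 1 < F w := lt_of_not_ge hw
        have hsum : 0 ≤ ∑ z ∈ t, g z w * g z w :=
          Finset.sum_nonneg (fun z _ => mul_self_nonneg _)
        rw [hval]; linarith
    have hunit : IsUnit s := by
      refine IsUnit.of_mul_eq_one (a := s)
        ⟨fun w => (s w)⁻¹, ContMDiff.inv₀ s.contMDiff (fun w => (hspos w).ne')⟩ ?_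
      ext w
      exact mul_inv_cancel₀ (hspos w).ne'
    exact J.eq_top_of_isUnit_mem hsJ hunit

lemma mem_mIdeal {x : M} {f : SmoothFns m M} : f ∈ mIdeal x ↔ f x = 0 := Iff.rfl

lemma mIdeal_isMaximal (x : M) : (mIdeal (m := m) x).IsMaximal := by
  have hker : mIdeal (m := m) x = RingHom.ker (evAlg x) := by
    ext f; rfl
  rw [hker]
  exact RingHom.ker_isMaximal_of_surjective (evAlg x).toRingHom
    (fun c => ⟨algebraMap ℝ _ c, (evAlg x).commutes c⟩)

lemma mIdeal_ne_top (x : M) : (mIdeal (m := m) x) ≠ ⊤ := (mIdeal_isMaximal x).ne_top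

lemma fd_factor {J J' : Ideal (SmoothFns m M)} (h : J ≤ J')
    [FiniteDimensional ℝ (SmoothFns m M ⧸ J)] :
    FiniteDimensional ℝ (SmoothFns m M ⧸ J') := by
  let φ := Ideal.quotientMapₐ (R₁ := ℝ) J' (AlgHom.id ℝ (SmoothFns m M)) (by simpa using h)
  have hsurj : Function.Surjective φ := by
    intro a
    obtain ⟨f, rfl⟩ := Ideal.Quotient.mk_surjective a
    exact ⟨Ideal.Quotient.mk J f, rfl⟩
  exact Module.Finite.of_surjective φ.toLinearMap hsurj

lemma maximal_eq {J : Ideal (SmoothFns m M)} [FiniteDimensional ℝ (SmoothFns m M ⧸ J)]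
    {P : Ideal (SmoothFns m M)} (hP : P.IsMaximal) (hJP : J ≤ P) :
    ∃ x : M, P = mIdeal x ∧ x ∈ idealSpec J := by
  haveI : FiniteDimensional ℝ (SmoothFns m M ⧸ P) := fd_factor hJP
  have hspec : ∃ x : M, ∀ g ∈ P, g x = 0 := by
    by_contra hc
    push_neg at hc
    exact hP.ne_top (eq_top_of_spec_empty P (fun x => hc x))
  obtain ⟨x, hx⟩ := hspec
  have hle : P ≤ mIdeal x := fun g hg => hx g hg
  have : P = mIdeal x := hP.eq_of_le (mIdeal_ne_top x) hle
  exact ⟨x, this, fun g hg => hx g (hJP hg)⟩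

lemma jacobson_pow_le (J : Ideal (SmoothFns m M))
    [FiniteDimensional ℝ (SmoothFns m M ⧸ J)] :
    ∃ N : ℕ, (Ideal.jacobson J) ^ N ≤ J := by
  haveI : IsArtinian ℝ (SmoothFns m M ⧸ J) := inferInstance
  haveI : IsArtinianRing (SmoothFns m M ⧸ J) := isArtinian_of_tower ℝ inferInstance
  obtain ⟨N, hN⟩ := IsArtinianRing.isNilpotent_jacobson_bot (R := SmoothFns m M ⧸ J)
  refine ⟨N, ?_⟩
  have hmap : Ideal.map (Ideal.Quotient.mk J) (Ideal.jacobson J)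
      = Ideal.jacobson (⊥ : Ideal (SmoothFns m M ⧸ J)) := by
    rw [Ideal.map_jacobson_of_surjective Ideal.Quotient.mk_surjective
      (le_of_eq Ideal.mk_ker), Ideal.map_quotient_self]
  calc (Ideal.jacobson J) ^ N
      ≤ Ideal.comap (Ideal.Quotient.mk J)
        (Ideal.map (Ideal.Quotient.mk J) ((Ideal.jacobson J) ^ N)) := Ideal.le_comap_map
    _ = Ideal.comap (Ideal.Quotient.mk J) ⊥ := by rw [Ideal.map_pow, hmap, hN, Submodule.zero_eq_bot]
    _ = J := by rw [← RingHom.ker_eq_comap_bot, Ideal.mk_ker]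

lemma pow_finrank_eq_bot {B : Type*} [CommRing B] [Algebra ℝ B] [FiniteDimensional ℝ B]
    (b : Ideal B) (hb : b ≤ Ideal.jacobson ⊥) : b ^ (finrank ℝ B) = ⊥ := by
  haveI : IsNoetherian B B := isNoetherian_of_tower ℝ inferInstance
  have key : ∀ j : ℕ, b ^ j = ⊥ ∨
      finrank ℝ (Submodule.restrictScalars ℝ (b ^ j : Ideal B)) + j ≤ finrank ℝ B := by
    intro j
    induction j with
    | zero =>
      right
      rw [pow_zero, Ideal.one_eq_top, add_zero,
        show Submodule.restrictScalars ℝ (⊤ : Ideal B) = ⊤ from Submodule.restrictScalars_top ℝ B B]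
      exact le_of_eq (finrank_top ℝ B)
    | succ j ih =>
      by_cases hbj : b ^ (j + 1) = ⊥
      · exact Or.inl hbj
      right
      have hjne : b ^ j ≠ ⊥ := by
        intro hj
        apply hbj
        rw [pow_succ]
        rw [eq_bot_iff]
        calc b ^ j * b ≤ b ^ j := Ideal.mul_le_left
          _ = ⊥ := hj
      have hle : b ^ (j + 1) ≤ b ^ j := by
        rw [pow_succ]; exact Ideal.mul_le_left
      have hne : b ^ (j + 1) ≠ b ^ j := by
        intro heq
        apply hjne
        refine Submodule.eq_bot_of_le_smul_of_le_jacobson_bot b (b ^ j)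
          (IsNoetherian.noetherian _) (le_of_eq ?_) hb
        calc (b ^ j : Ideal B) = b ^ (j + 1) := heq.symm
          _ = b * b ^ j := pow_succ' b j
          _ = b • b ^ j := (Ideal.smul_eq_mul _ _).symm
      have hlt : Submodule.restrictScalars ℝ (b ^ (j + 1)) < Submodule.restrictScalars ℝ (b ^ j) :=
        lt_of_le_of_ne (fun v hv => hle hv)
          (fun heq => hne (Submodule.restrictScalars_injective ℝ _ _ heq))
      have hrank := Submodule.finrank_lt_finrank_of_lt hlt
      rcases ih with h | h
      · exact absurd h hjne
      omega
  rcases key (finrank ℝ B) with h | h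
  · exact h
  have h0 : finrank ℝ (Submodule.restrictScalars ℝ (b ^ finrank ℝ B : Ideal B)) = 0 := by omega
  have := Submodule.finrank_eq_zero.mp h0
  rw [← Submodule.restrictScalars_bot ℝ (R := B) (M := B)] at this
  exact Submodule.restrictScalars_injective ℝ _ _ this

lemma nIdeal_le_mIdeal (x : M) : nIdeal (m := m) x ≤ mIdeal x := fun f hf => hf.self_of_nhds

lemma exists_nIdeal_ne {x z : M} (hz : z ≠ x) :
    ∃ g ∈ nIdeal (m := m) x, g z ≠ 0 := by
  obtain ⟨U, V, hU, hV, hzU, hxV, hUV⟩ := t2_separation hz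
  obtain ⟨f, hf1, hf0⟩ := exists_bump (m := m) z hU hzU
  refine ⟨f, ?_, ?_⟩
  · refine eventually_of_mem (hV.mem_nhds hxV) (fun w hw => hf0 w ?_)
    exact fun hwU => (Set.disjoint_left.1 hUV hwU) hw
  · rw [hf1.self_of_nhds]; exact one_ne_zero

lemma mIdeal_pow_le {J : Ideal (SmoothFns m M)} [FiniteDimensional ℝ (SmoothFns m M ⧸ J)]
    {x : M} (hJ : J ≤ mIdeal x) (hspec : idealSpec J ⊆ {x}) :
    (mIdeal x) ^ (finrank ℝ (SmoothFns m M ⧸ J)) ≤ J := by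
  have hjac : Ideal.jacobson J = mIdeal x := by
    apply le_antisymm
    · exact sInf_le ⟨hJ, mIdeal_isMaximal x⟩
    · rw [Ideal.jacobson]
      apply le_sInf
      rintro P ⟨hJP, hPmax⟩
      obtain ⟨z, rfl, hz⟩ := maximal_eq hPmax hJP
      have : z = x := hspec hz
      rw [this]
  have hmap : Ideal.map (Ideal.Quotient.mk J) (mIdeal x)
      = Ideal.jacobson (⊥ : Ideal (SmoothFns m M ⧸ J)) := by
    rw [← hjac, Ideal.map_jacobson_of_surjective Ideal.Quotient.mk_surjective
      (le_of_eq Ideal.mk_ker), Ideal.map_quotient_self]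
  have hnil := pow_finrank_eq_bot (Ideal.map (Ideal.Quotient.mk J) (mIdeal x)) (le_of_eq hmap)
  calc (mIdeal x) ^ (finrank ℝ (SmoothFns m M ⧸ J))
      ≤ Ideal.comap (Ideal.Quotient.mk J)
        (Ideal.map (Ideal.Quotient.mk J) ((mIdeal x) ^ (finrank ℝ (SmoothFns m M ⧸ J)))) :=
        Ideal.le_comap_map
    _ = Ideal.comap (Ideal.Quotient.mk J) ⊥ := by rw [Ideal.map_pow, hnil]
    _ = J := by rw [← RingHom.ker_eq_comap_bot, Ideal.mk_ker]

lemma mul_one_sub_prod_mem {S : Type*} [CommRing S] (I : Ideal S) {ι : Type*} [DecidableEq ι]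
    (s : Finset ι) (a : ι → S) (f : S) (h : ∀ i ∈ s, f * a i ∈ I) :
    f * (1 - ∏ i ∈ s, (1 - a i)) ∈ I := by
  induction s using Finset.induction with
  | empty => simp
  | insert _ _ hi ih =>
    rename_i i s
    rw [Finset.prod_insert hi]
    have heq : f * (1 - (1 - a i) * ∏ j ∈ s, (1 - a j))
        = f * (1 - ∏ j ∈ s, (1 - a j)) + (f * a i) * ∏ j ∈ s, (1 - a j) := by ring
    rw [heq]
    exact Ideal.add_mem _ (ih (fun j hj => h j (Finset.mem_insert_of_mem hj)))
      (Ideal.mul_mem_right _ _ (h i (Finset.mem_insert_self i s)))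

theorem main
    (I : Ideal (SmoothFns m M)) (hI : I ≠ ⊤)
    (hfd : FiniteDimensional ℝ (SmoothFns m M ⧸ I))
    (n : ℕ) (y : Fin n → M) (hy : Function.Injective y)
    (hrange : idealSpec I = Set.range y)
    (k : Fin n → ℕ)
    (hk : ∀ i, k i = Module.finrank ℝ (SmoothFns m M ⧸ (I + nIdeal (y i)))) :
    ⨅ i, (mIdeal (y i)) ^ (k i) ≤ I := by
  classical
  haveI := hfd
  intro f hf
  rw [Submodule.mem_iInf] at hf
  have hev : ∀ (z : M) (w : Fin n → SmoothFns m M),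
      (∏ i, w i) z = ∏ i, (w i) z := fun z w => map_prod (evAlg z) w Finset.univ
  have hyspec : ∀ i, y i ∈ idealSpec I := by
    intro i; rw [hrange]; exact Set.mem_range_self i
  set J : Fin n → Ideal (SmoothFns m M) := fun i => I + nIdeal (y i) with hJ
  have hJsup : ∀ i, J i = I ⊔ nIdeal (y i) := fun i => Submodule.add_eq_sup _ _
  have hJle : ∀ i, J i ≤ mIdeal (y i) := by
    intro i; rw [hJsup i]
    exact sup_le (fun g hg => hyspec i g hg) (nIdeal_le_mIdeal (y i))
  haveI hJfd : ∀ i, FiniteDimensional ℝ (SmoothFns m M ⧸ J i) := by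
    intro i
    exact fd_factor (J := I) (by rw [hJsup i]; exact le_sup_left)
  have hspecJ : ∀ i, idealSpec (J i) ⊆ {y i} := by
    intro i z hz
    by_contra hne
    obtain ⟨g, hgn, hgz⟩ := exists_nIdeal_ne (m := m) (x := y i) (z := z) hne
    exact hgz (hz g (by rw [hJsup i]; exact le_sup_right (α := Ideal (SmoothFns m M)) hgn))
  have hmem : ∀ i, f ∈ J i := by
    intro i
    have hle := mIdeal_pow_le (hJle i) (hspecJ i)
    rw [← hk i] at hle
    exact hle (hf i)
  have hdecomp : ∀ i, ∃ g ∈ I, ∃ h ∈ nIdeal (y i), f = g + h := by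
    intro i
    have := hmem i
    rw [hJsup i] at this
    obtain ⟨g, hg, h, hh, hgh⟩ := Submodule.mem_sup.1 this
    exact ⟨g, hg, h, hh, hgh.symm⟩
  choose g hgI h hhn hfgh using hdecomp
  have hV : ∀ i, ∃ V : Set M, IsOpen V ∧ y i ∈ V ∧ ∀ z ∈ V, h i z = 0 := by
    intro i
    obtain ⟨V, hsub, hopen, hmem'⟩ := mem_nhds_iff.1 (hhn i)
    exact ⟨V, hopen, hmem', fun z hz => hsub hz⟩
  choose V hVopen hVmem hVzero using hV
  choose χ hχ1 hχ0 using fun i => exists_bump (m := m) (y i) (hVopen i) (hVmem i)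
  have hfχ : ∀ i, f * χ i ∈ I := by
    intro i
    have heq : f * χ i = g i * χ i + h i * χ i := by rw [hfgh i]; ring
    have hzero : h i * χ i = 0 := by
      ext w
      by_cases hw : w ∈ V i
      · show h i w * χ i w = (0 : SmoothFns m M) w
        simp [hVzero i w hw]
      · show h i w * χ i w = (0 : SmoothFns m M) w
        simp [hχ0 i w hw]
    rw [heq, hzero, add_zero]
    exact Ideal.mul_mem_right _ _ (hgI i)
  have hO : ∀ i, ∃ O : Set M, IsOpen O ∧ y i ∈ O ∧ ∀ z ∈ O, χ i z = 1 := by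
    intro i
    obtain ⟨O, hsub, hopen, hmem'⟩ := mem_nhds_iff.1 (hχ1 i)
    exact ⟨O, hopen, hmem', fun z hz => hsub hz⟩
  choose O hOopen hOmem hOone using hO
  choose ψ hψ1 hψ0 using fun i => exists_bump (m := m) (y i) (hOopen i) (hOmem i)
  set P : SmoothFns m M := ∏ i, (1 - χ i) with hP
  set Q : SmoothFns m M := ∏ i, (1 - ψ i) with hQ
  set u : SmoothFns m M := f * P with hu
  have hfu : f - u ∈ I := by
    have hmem' := mul_one_sub_prod_mem I Finset.univ (fun i => (χ i : SmoothFns m M)) f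
      (fun i _ => hfχ i)
    have heq : f - u = f * (1 - ∏ i, (1 - χ i)) := by rw [hu, hP]; ring
    rw [heq]
    exact hmem'
  have huO : ∀ i, ∀ z ∈ O i, u z = 0 := by
    intro i z hz
    have hPz : P z = 0 := by
      rw [hP]
      rw [hev z (fun i => 1 - χ i)]
      refine Finset.prod_eq_zero (Finset.mem_univ i) ?_
      show (1 : SmoothFns m M) z - χ i z = 0
      simp [hOone i z hz]
    show f z * P z = 0
    rw [hPz, mul_zero]
  have huQ : u = u * Q := by
    have : u * (1 - Q) = 0 := by
      ext z
      show u z * ((1 : SmoothFns m M) z - Q z) = (0 : SmoothFns m M) z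
      by_cases hz : ∀ i, ψ i z = 0
      · have : Q z = 1 := by
          rw [hQ, hev z (fun i => 1 - ψ i)]
          refine Finset.prod_eq_one (fun i _ => ?_)
          show (1 : SmoothFns m M) z - ψ i z = 1
          simp [hz i]
        simp [this]
      · push_neg at hz
        obtain ⟨i, hi⟩ := hz
        have hzO : z ∈ O i := by
          by_contra hzO
          exact hi (hψ0 i z hzO)
        simp [huO i z hzO]
    have h2 : u - u * Q = 0 := by rw [← this]; ring
    exact (sub_eq_zero.1 h2)
  have hiter : ∀ N : ℕ, u = u * Q ^ N := by
    intro N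
    induction N with
    | zero => simp
    | succ N ih =>
      calc u = u * Q := huQ
        _ = (u * Q ^ N) * Q := by rw [← ih]
        _ = u * Q ^ (N + 1) := by ring
  have hQy : ∀ i, Q ∈ mIdeal (y i) := by
    intro i
    rw [mem_mIdeal, hQ, hev (y i) (fun j => 1 - ψ j)]
    refine Finset.prod_eq_zero (Finset.mem_univ i) ?_
    show (1 : SmoothFns m M) (y i) - ψ i (y i) = 0
    simp [(hψ1 i).self_of_nhds]
  have hQjac : Q ∈ Ideal.jacobson I := by
    rw [Ideal.jacobson]
    rw [Submodule.mem_sInf]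
    rintro P' ⟨hIP, hPmax⟩
    obtain ⟨x, rfl, hx⟩ := maximal_eq hPmax hIP
    rw [hrange] at hx
    obtain ⟨i, rfl⟩ := hx
    exact hQy i
  obtain ⟨N, hN⟩ := jacobson_pow_le I
  have hQN : Q ^ N ∈ I := hN (Ideal.pow_mem_pow hQjac N)
  have huI : u ∈ I := by
    rw [hiter N]
    exact Ideal.mul_mem_left _ _ hQN
  have : f = (f - u) + u := by ring
  rw [this]
  exact Ideal.add_mem _ hfu huI

end StatementSeven
end StatementSevenAux

/-- Let `I` be a proper ideal of `R = C^∞(M,ℝ)` of finite codimension with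
spectrum `{y 1, …, y n}` and set `k i = dim_ℝ(R/(I + 𝔫_{y i}))`. Then
`(𝔪_{y 1})^{k 1} ∩ ⋯ ∩ (𝔪_{y n})^{k n} ⊆ I`. -/
theorem pow_mIdeal_inf_le
    (I : Ideal (SmoothFns m M)) (hI : I ≠ ⊤)
    (hfd : FiniteDimensional ℝ (SmoothFns m M ⧸ I))
    (n : ℕ) (y : Fin n → M) (hy : Function.Injective y)
    (hrange : idealSpec I = Set.range y)
    (k : Fin n → ℕ)
    (hk : ∀ i, k i = Module.finrank ℝ (SmoothFns m M ⧸ (I + nIdeal (y i)))) :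
    ⨅ i, (mIdeal (y i)) ^ (k i) ≤ I :=
  StatementSeven.main I hI hfd n y hy hrange k hk
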